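/- Every 2-dimensional complex triassociative algebra whose ⊢-operation satisfies x⊢x = x and all other basis ⊢-products are zero (for some basis {x,y}) is isomorphic to one of Trias₂²⁵, Trias₂²⁶, or Trias₂²⁷ (for some α ∈ ℂ). -/

import Mathlib

/-- A triassociative algebra structure on a complex vector space `T`:
three bilinear operations `l` (⊢), `r` (⊣), `m` (⊥) satisfying the
11 Loday–Ronco identities. -/
structure Trias (T : Type*) [AddCommGroup T] [Module ℂ T] where
  l : T →ₗ[ℂ] T →ₗ[ℂ] T
  r : T →ₗ[ℂ] T →ₗ[ℂ] T
  m : T →ₗ[ℂ] T →ₗ[ℂ] T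
  A1 : ∀ x y z, l (l x y) z = l x (l y z)
  A2 : ∀ x y z, r (r x y) z = r x (r y z)
  D1 : ∀ x y z, l (r x y) z = l x (l y z)
  D2 : ∀ x y z, r (r x y) z = r x (l y z)
  S1 : ∀ x y z, r (l x y) z = l x (r y z)
  T1 : ∀ x y z, l (m x y) z = l x (l y z)
  T2 : ∀ x y z, r (r x y) z = r x (m y z)
  T3 : ∀ x y z, m (l x y) z = l x (m y z)
  T4 : ∀ x y z, r (m x y) z = m x (r y z)
  S2 : ∀ x y z, m (r x y) z = m x (l y z)
  A3 : ∀ x y z, m (m x y) z = m x (m y z)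

/-- Every 2-dimensional complex triassociative algebra whose `⊢`-operation
satisfies `x⊢x = x` with all other basis `⊢`-products zero is isomorphic to
one of `Trias₂²⁵`, `Trias₂²⁶`, or `Trias₂²⁷` (for some `α ∈ ℂ`). -/
theorem stmt14 {T : Type*} [AddCommGroup T] [Module ℂ T]
    (b : Module.Basis (Fin 2) ℂ T) (A : Trias T)
    (x : T) (y : T) (hx : x = b 0) (hy : y = b 1)
    (h1 : A.l x x = x) (h2 : A.l x y = 0) (h3 : A.l y x = 0) (h4 : A.l y y = 0) :
    -- Trias₂²⁵ : x⊣x = x, y⊣x = y, x⊥x = x, y⊥x = y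
    (A.r x x = x ∧ A.r x y = 0 ∧ A.r y x = y ∧ A.r y y = 0 ∧
      A.m x x = x ∧ A.m x y = 0 ∧ A.m y x = y ∧ A.m y y = 0) ∨
    -- Trias₂²⁶ : x⊣x = x, y⊣x = y, x⊥x = x
    (A.r x x = x ∧ A.r x y = 0 ∧ A.r y x = y ∧ A.r y y = 0 ∧
      A.m x x = x ∧ A.m x y = 0 ∧ A.m y x = 0 ∧ A.m y y = 0) ∨
    -- Trias₂²⁷ : x⊣x = x, x⊥x = x, y⊥y = αy
    (∃ α : ℂ, A.r x x = x ∧ A.r x y = 0 ∧ A.r y x = 0 ∧ A.r y y = 0 ∧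
      A.m x x = x ∧ A.m x y = 0 ∧ A.m y x = 0 ∧ A.m y y = α • y) := by
  -- basic facts
  have hx0 : x ≠ 0 := by rw [hx]; exact b.ne_zero 0
  have hy0 : y ≠ 0 := by rw [hy]; exact b.ne_zero 1
  have rep : ∀ v : T, ∃ p q : ℂ, v = p • x + q • y := by
    intro v
    refine ⟨b.repr v 0, b.repr v 1, ?_⟩
    have := b.sum_repr v
    rw [Fin.sum_univ_two] at this
    rw [hx, hy]; exact this.symm
  have cancel : ∀ (a c : ℂ) (w : T), w ≠ 0 → a • w = c • w → a = c := by
    intro a c w hw h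
    have h' : (a - c) • w = 0 := by rw [sub_smul, h, sub_self]
    rcases smul_eq_zero.mp h' with h'' | h''
    · exact sub_eq_zero.mp h''
    · exact absurd h'' hw
  -- l x v = (repr) • x
  have hLx : ∀ v : T, ∃ k : ℂ, A.l x v = k • x := by
    intro v
    obtain ⟨p, q, hv⟩ := rep v
    exact ⟨p, by rw [hv]; simp [map_add, map_smul, h1, h2]⟩
  -- r x x = x
  have hrxx : A.r x x = x := by
    obtain ⟨k, hk⟩ := hLx (A.r x x)
    have e1 : A.r x x = k • x := by
      have hs := A.S1 x x x
      rw [h1] at hs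
      exact hs.trans hk
    have e2 : A.l (A.r x x) x = x := by rw [A.D1 x x x, h1, h1]
    rw [e1] at e2
    simp only [map_smul, LinearMap.smul_apply, h1] at e2
    rw [e1, e2]
  -- r x y = 0
  have hrxy : A.r x y = 0 := by
    obtain ⟨k, hk⟩ := hLx (A.r x y)
    have e1 : A.r x y = k • x := by
      have hs := A.S1 x x y
      rw [h1] at hs
      exact hs.trans hk
    have e2 : A.l (A.r x y) x = 0 := by rw [A.D1 x y x, h3, map_zero]
    rw [e1] at e2
    simp only [map_smul, LinearMap.smul_apply, h1] at e2
    rw [e1, e2]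
  -- r y x = f • y
  obtain ⟨e, f, hef⟩ := rep (A.r y x)
  have he : e = 0 := by
    have e2 : A.l (A.r y x) x = 0 := by rw [A.D1 y x x, h1, h3]
    rw [hef] at e2
    simp only [map_add, map_smul, LinearMap.add_apply, LinearMap.smul_apply,
      h1, h3, smul_zero, add_zero] at e2
    have := cancel e 0 x hx0 (by rw [e2, zero_smul])
    exact this
  have hryx : A.r y x = f • y := by rw [hef, he, zero_smul, zero_add]
  -- r y y = 0
  have hryy : A.r y y = 0 := by
    obtain ⟨g, h', hgh⟩ := rep (A.r y y)
    have hg : g = 0 := by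
      have e2 : A.l (A.r y y) x = 0 := by rw [A.D1 y y x, h3, map_zero]
      rw [hgh] at e2
      simp only [map_add, map_smul, LinearMap.add_apply, LinearMap.smul_apply,
        h1, h3, smul_zero, add_zero] at e2
      exact cancel g 0 x hx0 (by rw [e2, zero_smul])
    have hryy' : A.r y y = h' • y := by rw [hgh, hg, zero_smul, zero_add]
    have e3 : A.r (A.r y y) y = 0 := by rw [A.D2 y y y, h4, map_zero]
    rw [hryy'] at e3
    simp only [map_smul, LinearMap.smul_apply, hryy', smul_smul] at e3
    have hh : h' * h' = 0 := cancel (h' * h') 0 y hy0 (by rw [e3, zero_smul])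
    have : h' = 0 := by
      rcases mul_eq_zero.mp hh with h0 | h0 <;> exact h0
    rw [hryy', this, zero_smul]
  -- f * f = f
  have hff : f * f = f := by
    have e1 : A.r (A.r y x) x = A.r y x := by rw [A.A2 y x x, hrxx]
    rw [hryx] at e1
    simp only [map_smul, LinearMap.smul_apply, hryx, smul_smul] at e1
    exact cancel (f * f) f y hy0 e1
  -- m x x = x
  have hmxx : A.m x x = x := by
    obtain ⟨k, hk⟩ := hLx (A.m x x)
    have e1 : A.m x x = k • x := by
      have hs := A.T3 x x x
      rw [h1] at hs
      exact hs.trans hk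
    have e2 : A.l (A.m x x) x = x := by rw [A.T1 x x x, h1, h1]
    rw [e1] at e2
    simp only [map_smul, LinearMap.smul_apply, h1] at e2
    rw [e1, e2]
  -- m x y = 0
  have hmxy : A.m x y = 0 := by
    obtain ⟨k, hk⟩ := hLx (A.m x y)
    have e1 : A.m x y = k • x := by
      have hs := A.T3 x x y
      rw [h1] at hs
      exact hs.trans hk
    have e2 : A.l (A.m x y) x = 0 := by rw [A.T1 x y x, h3, map_zero]
    rw [e1] at e2
    simp only [map_smul, LinearMap.smul_apply, h1] at e2
    rw [e1, e2]
  -- m y x = v • y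
  obtain ⟨u, v, huv⟩ := rep (A.m y x)
  have hu : u = 0 := by
    have e2 : A.l (A.m y x) x = 0 := by rw [A.T1 y x x, h1, h3]
    rw [huv] at e2
    simp only [map_add, map_smul, LinearMap.add_apply, LinearMap.smul_apply,
      h1, h3, smul_zero, add_zero] at e2
    exact cancel u 0 x hx0 (by rw [e2, zero_smul])
  have hmyx : A.m y x = v • y := by rw [huv, hu, zero_smul, zero_add]
  -- m y y = z • y
  obtain ⟨w, z, hwz⟩ := rep (A.m y y)
  have hw : w = 0 := by
    have e2 : A.l (A.m y y) x = 0 := by rw [A.T1 y y x, h3, map_zero]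
    rw [hwz] at e2
    simp only [map_add, map_smul, LinearMap.add_apply, LinearMap.smul_apply,
      h1, h3, smul_zero, add_zero] at e2
    exact cancel w 0 x hx0 (by rw [e2, zero_smul])
  have hmyy : A.m y y = z • y := by rw [hwz, hw, zero_smul, zero_add]
  -- v * v = v
  have hvv : v * v = v := by
    have e1 : A.m (A.m y x) x = A.m y x := by rw [A.A3 y x x, hmxx]
    rw [hmyx] at e1
    simp only [map_smul, LinearMap.smul_apply, hmyx, smul_smul] at e1
    exact cancel (v * v) v y hy0 e1
  -- v * z = 0
  have hvz : v * z = 0 := by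
    have e1 : A.m (A.m y x) y = 0 := by rw [A.A3 y x y, hmxy, map_zero]
    rw [hmyx] at e1
    simp only [map_smul, LinearMap.smul_apply, hmyy, smul_smul] at e1
    exact cancel (v * z) 0 y hy0 (by rw [e1, zero_smul])
  -- v * f = v
  have hvf : v * f = v := by
    have e1 : A.r (A.m y x) x = A.m y x := by rw [A.T4 y x x, hrxx]
    rw [hmyx] at e1
    simp only [map_smul, LinearMap.smul_apply, hryx, hmyx, smul_smul] at e1
    exact cancel (v * f) v y hy0 e1
  -- f * z = 0
  have hfz : f * z = 0 := by
    have e1 : A.m (A.r y x) y = 0 := by rw [A.S2 y x y, h2, map_zero]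
    rw [hryx] at e1
    simp only [map_smul, LinearMap.smul_apply, hmyy, smul_smul] at e1
    exact cancel (f * z) 0 y hy0 (by rw [e1, zero_smul])
  -- case analysis
  have hf01 : f = 0 ∨ f = 1 := by
    rcases mul_eq_zero.mp (show f * (f - 1) = 0 by linear_combination hff) with h0 | h0
    · exact Or.inl h0
    · exact Or.inr (by linear_combination h0)
  have hv01 : v = 0 ∨ v = 1 := by
    rcases mul_eq_zero.mp (show v * (v - 1) = 0 by linear_combination hvv) with h0 | h0
    · exact Or.inl h0
    · exact Or.inr (by linear_combination h0)
  rcases hf01 with hf | hf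
  · -- f = 0 : Trias 27
    refine Or.inr (Or.inr ⟨z, hrxx, hrxy, ?_, hryy, hmxx, hmxy, ?_, hmyy⟩)
    · rw [hryx, hf, zero_smul]
    · have hv : v = 0 := by rw [← hvf, hf, mul_zero]
      rw [hmyx, hv, zero_smul]
  · -- f = 1
    have hz : z = 0 := by rw [← hfz, hf, one_mul]
    have hmyy0 : A.m y y = 0 := by rw [hmyy, hz, zero_smul]
    have hryx1 : A.r y x = y := by rw [hryx, hf, one_smul]
    rcases hv01 with hv | hv
    · exact Or.inr (Or.inl ⟨hrxx, hrxy, hryx1, hryy, hmxx, hmxy,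
        by rw [hmyx, hv, zero_smul], hmyy0⟩)
    · exact Or.inl ⟨hrxx, hrxy, hryx1, hryy, hmxx, hmxy,
        by rw [hmyx, hv, one_smul], hmyy0⟩
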